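/- Fix b > 0 and an integer m ≥ 1, and adopt the double-factorial convention (−1)!! = 0!! = 1. Define F : (0,b) → ℝ by F(s) := [(2m−1)!!/(2m−2)!!]·(1/s)·Σ_{i=1}^{m−1} [(2m−2−2i)!!/(2m−2i+1)!!]·(b²)^{i−1}·(b²−s²)^{(2m−2i+1)/2} − [(2m−1)!!/(2m−2)!!]·(1/s)·(b²)^{m−1}·[(b²−s²)^{1/2} + s·arctan(s/√(b²−s²))] (the sum being empty when m = 1). Then for every s ∈ (0,b): F'(s) = s^{−2}·(b² − s²)^{(2m−1)/2}. -/

import Mathlib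

open Set

def dfac : ℕ → ℕ
  | 0 => 1
  | 1 => 1
  | n + 2 => (n + 2) * dfac n

lemma dfac_add_two (n : ℕ) : dfac (n + 2) = (n + 2) * dfac n := rfl

lemma dfac_pos : ∀ n, 0 < dfac n
  | 0 => one_pos
  | 1 => one_pos
  | n + 2 => Nat.mul_pos (by omega) (dfac_pos n)

noncomputable def Gfun (b : ℝ) (m : ℕ) (s : ℝ) : ℝ :=
  ((dfac (2 * m - 1) : ℝ) / (dfac (2 * m - 2))) * (1 / s) *
      (∑ i ∈ Finset.Icc 1 (m - 1),
        ((dfac (2 * m - 2 - 2 * i) : ℝ) / (dfac (2 * m - 2 * i + 1))) *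
          (b ^ 2) ^ (i - 1) *
          (b ^ 2 - s ^ 2) ^ ((2 * (m : ℝ) - 2 * (i : ℝ) + 1) / 2)) -
    ((dfac (2 * m - 1) : ℝ) / (dfac (2 * m - 2))) * (1 / s) * (b ^ 2) ^ (m - 1) *
      (Real.sqrt (b ^ 2 - s ^ 2) +
        s * Real.arctan (s / Real.sqrt (b ^ 2 - s ^ 2)))

lemma sum_Icc_one {M : Type*} [AddCommMonoid M] (f : ℕ → M) (n : ℕ) :
    ∑ i ∈ Finset.Icc 1 n, f i = ∑ i ∈ Finset.range n, f (i + 1) := by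
  induction n with
  | zero => simp
  | succ n ih => rw [Finset.sum_Icc_succ_top (by omega), ih, Finset.sum_range_succ]

lemma Gfun_succ (b : ℝ) (k : ℕ) (s : ℝ) :
    Gfun b (k + 2) s = ((2 * (k : ℝ) + 3) / (2 * (k : ℝ) + 2)) * b ^ 2 * Gfun b (k + 1) s
      + (1 / (2 * (k : ℝ) + 2)) * ((1 / s) * (b ^ 2 - s ^ 2) ^ ((2 * (k : ℝ) + 3) / 2)) := by
  simp only [Gfun,
    show 2 * (k + 2) - 1 = (2 * k + 1) + 2 from by omega,
    show 2 * (k + 2) - 2 = 2 * k + 2 from by omega,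
    show k + 2 - 1 = k + 1 from rfl,
    show 2 * (k + 1) - 1 = 2 * k + 1 from by omega,
    show 2 * (k + 1) - 2 = 2 * k from by omega,
    show k + 1 - 1 = k from rfl,
    dfac_add_two]
  rw [sum_Icc_one _ (k + 1), Finset.sum_range_succ' _ k, sum_Icc_one _ k]
  have hterm : ∀ i ∈ Finset.range k,
      ((dfac (2 * k + 2 - 2 * (i + 1 + 1)) : ℝ) / (dfac (2 * (k + 2) - 2 * (i + 1 + 1) + 1))) *
          (b ^ 2) ^ (i + 1 + 1 - 1) *
          (b ^ 2 - s ^ 2) ^ ((2 * ((k + 2 : ℕ) : ℝ) - 2 * ((i + 1 + 1 : ℕ) : ℝ) + 1) / 2)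
        = b ^ 2 * (((dfac (2 * k - 2 * (i + 1)) : ℝ) / (dfac (2 * (k + 1) - 2 * (i + 1) + 1))) *
          (b ^ 2) ^ (i + 1 - 1) *
          (b ^ 2 - s ^ 2) ^ ((2 * ((k + 1 : ℕ) : ℝ) - 2 * ((i + 1 : ℕ) : ℝ) + 1) / 2)) := by
    intro i hi
    have hik : i < k := Finset.mem_range.mp hi
    have e1 : 2 * k + 2 - 2 * (i + 1 + 1) = 2 * k - 2 * (i + 1) := by omega
    have e2 : 2 * (k + 2) - 2 * (i + 1 + 1) + 1 = 2 * (k + 1) - 2 * (i + 1) + 1 := by omega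
    have e3 : ((2 * ((k + 2 : ℕ) : ℝ) - 2 * ((i + 1 + 1 : ℕ) : ℝ) + 1) / 2)
        = ((2 * ((k + 1 : ℕ) : ℝ) - 2 * ((i + 1 : ℕ) : ℝ) + 1) / 2) := by push_cast; ring
    rw [e1, e2, e3, show i + 1 + 1 - 1 = i + 1 from rfl, show i + 1 - 1 = i from rfl, pow_succ]
    ring
  rw [Finset.sum_congr rfl hterm, ← Finset.mul_sum]
  have e4 : 2 * k + 2 - 2 * (0 + 1) = 2 * k := by omega
  have e5 : 2 * (k + 2) - 2 * (0 + 1) + 1 = (2 * k + 1) + 2 := by omega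
  have e6 : ((2 * ((k + 2 : ℕ) : ℝ) - 2 * ((0 + 1 : ℕ) : ℝ) + 1) / 2) = (2 * (k : ℝ) + 3) / 2 := by
    push_cast; ring
  rw [e4, e5, e6, dfac_add_two, show 0 + 1 - 1 = 0 from rfl, pow_zero, pow_succ]
  have hd1 : ((dfac (2 * k + 1) : ℝ)) ≠ 0 := by
    exact_mod_cast (dfac_pos (2 * k + 1)).ne'
  have hd2 : ((dfac (2 * k) : ℝ)) ≠ 0 := by
    exact_mod_cast (dfac_pos (2 * k)).ne'
  have hk2 : (2 * (k : ℝ) + 2) ≠ 0 := by positivity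
  have hk3 : (2 * (k : ℝ) + 3) ≠ 0 := by positivity
  generalize 1 / s = t
  push_cast
  field_simp
  ring

lemma hasDerivAt_term (b p s : ℝ) (hs : 0 < s) (hu : 0 < b ^ 2 - s ^ 2) :
    HasDerivAt (fun s => (1 / s) * (b ^ 2 - s ^ 2) ^ p)
      (-((b ^ 2 - s ^ 2) ^ p / s ^ 2) - 2 * p * (b ^ 2 - s ^ 2) ^ (p - 1)) s := by
  have h1 : HasDerivAt (fun s : ℝ => 1 / s) (-(1 / s ^ 2)) s := by
    simpa [one_div] using hasDerivAt_inv hs.ne'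
  have h2 : HasDerivAt (fun s : ℝ => b ^ 2 - s ^ 2) (-(2 * s)) s := by
    have := (hasDerivAt_pow 2 s).const_sub (b ^ 2)
    norm_num at this
    convert this using 1
  have h3 := h2.rpow_const (p := p) (Or.inl hu.ne')
  have h4 := h1.mul h3
  refine h4.congr_deriv ?_
  field_simp
  ring

lemma hasDerivAt_arcpart (b s : ℝ) (hs : 0 < s) (hu : 0 < b ^ 2 - s ^ 2) :
    HasDerivAt (fun s => (1 / s) * (Real.sqrt (b ^ 2 - s ^ 2) +
        s * Real.arctan (s / Real.sqrt (b ^ 2 - s ^ 2))))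
      (-(Real.sqrt (b ^ 2 - s ^ 2) / s ^ 2)) s := by
  have h1 : HasDerivAt (fun s : ℝ => 1 / s) (-(1 / s ^ 2)) s := by
    simpa [one_div] using hasDerivAt_inv hs.ne'
  have h2 : HasDerivAt (fun s : ℝ => b ^ 2 - s ^ 2) (-(2 * s)) s := by
    have := (hasDerivAt_pow 2 s).const_sub (b ^ 2)
    norm_num at this
    convert this using 1
  have ht0 : 0 < Real.sqrt (b ^ 2 - s ^ 2) := Real.sqrt_pos.2 hu
  have hsq := h2.sqrt hu.ne'
  have hq := (hasDerivAt_id s).div hsq ht0.ne'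
  have harc := hq.arctan
  have h5 := h1.mul (hsq.add ((hasDerivAt_id s).mul harc))
  refine h5.congr_deriv ?_
  simp only [Pi.add_apply, Pi.mul_apply, Pi.div_apply, id]
  have hpos : (0:ℝ) < 1 + (s / Real.sqrt (b ^ 2 - s ^ 2)) ^ 2 := by positivity
  generalize hgen : Real.sqrt (b ^ 2 - s ^ 2) = t at *
  field_simp
  ring

lemma hasDerivAt_Gfun (b : ℝ) (hb : 0 < b) (m : ℕ) (hm : 1 ≤ m) :
    ∀ s ∈ Ioo (0 : ℝ) b,
      HasDerivAt (Gfun b m) ((b ^ 2 - s ^ 2) ^ ((2 * (m : ℝ) - 1) / 2) / s ^ 2) s := by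
  induction m, hm using Nat.le_induction with
  | base =>
    intro s hs
    have hu : 0 < b ^ 2 - s ^ 2 := by nlinarith [hs.1, hs.2]
    have hG : Gfun b 1 = fun s => -((1 / s) * (Real.sqrt (b ^ 2 - s ^ 2) +
        s * Real.arctan (s / Real.sqrt (b ^ 2 - s ^ 2)))) := by
      funext t
      simp [Gfun, dfac]
    rw [hG]
    have := (hasDerivAt_arcpart b s hs.1 hu).neg
    refine this.congr_deriv ?_
    rw [Real.sqrt_eq_rpow]
    norm_num
  | succ m hm ih =>
    intro s hs
    have hu : 0 < b ^ 2 - s ^ 2 := by nlinarith [hs.1, hs.2]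
    obtain ⟨k, rfl⟩ : ∃ k, m = k + 1 := ⟨m - 1, by omega⟩
    have hG : Gfun b (k + 1 + 1) = fun s =>
        ((2 * (k : ℝ) + 3) / (2 * (k : ℝ) + 2)) * b ^ 2 * Gfun b (k + 1) s
        + (1 / (2 * (k : ℝ) + 2)) * ((1 / s) * (b ^ 2 - s ^ 2) ^ ((2 * (k : ℝ) + 3) / 2)) :=
      funext (Gfun_succ b k)
    rw [hG]
    have h1 := (ih s hs).const_mul (((2 * (k : ℝ) + 3) / (2 * (k : ℝ) + 2)) * b ^ 2)
    have h2 := (hasDerivAt_term b ((2 * (k : ℝ) + 3) / 2) s hs.1 hu).const_mul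
      ((1 : ℝ) / (2 * (k : ℝ) + 2))
    have h3 := h1.add h2
    refine h3.congr_deriv ?_
    have eA : (b ^ 2 - s ^ 2) ^ ((2 * (k : ℝ) + 3) / 2)
        = (b ^ 2 - s ^ 2) ^ ((2 * ((k : ℝ) + 1) - 1) / 2) * (b ^ 2 - s ^ 2) := by
      rw [← Real.rpow_add_one hu.ne']
      congr 1
      ring
    have eB : ((2 * (k : ℝ) + 3) / 2 - 1) = (2 * ((k : ℝ) + 1) - 1) / 2 := by ring
    have eC : ((2 * ((k + 1 + 1 : ℕ) : ℝ) - 1) / 2) = (2 * (k : ℝ) + 3) / 2 := by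
      push_cast; ring
    have eD : ((2 * ((k + 1 : ℕ) : ℝ) - 1) / 2) = (2 * ((k : ℝ) + 1) - 1) / 2 := by
      push_cast; ring
    rw [eC, eD] at *
    rw [eA, eB]
    have hs0 : s ≠ 0 := hs.1.ne'
    have hk2 : (2 * (k : ℝ) + 2) ≠ 0 := by positivity
    field_simp
    ring

theorem stmt_11 (b : ℝ) (hb : 0 < b) (m : ℕ) (hm : 1 ≤ m) (F : ℝ → ℝ)
    (hF : ∀ s : ℝ, F s =
      ((dfac (2 * m - 1) : ℝ) / (dfac (2 * m - 2))) * (1 / s) *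
        (∑ i ∈ Finset.Icc 1 (m - 1),
          ((dfac (2 * m - 2 - 2 * i) : ℝ) / (dfac (2 * m - 2 * i + 1))) *
            (b ^ 2) ^ (i - 1) *
            (b ^ 2 - s ^ 2) ^ ((2 * (m : ℝ) - 2 * (i : ℝ) + 1) / 2)) -
      ((dfac (2 * m - 1) : ℝ) / (dfac (2 * m - 2))) * (1 / s) * (b ^ 2) ^ (m - 1) *
        (Real.sqrt (b ^ 2 - s ^ 2) +
          s * Real.arctan (s / Real.sqrt (b ^ 2 - s ^ 2)))) :
    ∀ s ∈ Ioo (0 : ℝ) b,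
      HasDerivAt F ((b ^ 2 - s ^ 2) ^ ((2 * (m : ℝ) - 1) / 2) / s ^ 2) s := by
  have hFG : F = Gfun b m := funext fun s => (hF s).trans rfl
  rw [hFG]
  exact hasDerivAt_Gfun b hb m hm
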